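/- Let E ∈ M(J,{n_k},{c_k}) be a Moran set in ℝ^d with |J| = 1 and inf_k c_k > 0, let μ be its Moran measure, and set r_k = c₁⋯c_k (with r₀ = 1). Then there is a constant C_E > 1, depending only on d and the Lebesgue measure of the interior of J, such that for every x ∈ E, every k ≥ 1 and every r with r_k < r ≤ r_{k−1}: (n₁⋯n_k)^{-1} ≤ μ(B(x,r)) ≤ C_E (n₁⋯n_{k−1})^{-1} (where n₁⋯n_{k−1} = 1 for k = 1). -/

import Mathlib

open scoped ENNReal

noncomputable section

open Filter MeasureTheory

/-- A compact set `A` is *homogeneous* with respect to the Borel probability measure `μ`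
supported on `A` and constants `lam ≥ 1`, `kappa ∈ (0,1)`, `1 < del ≤ Del`. -/
structure IsHomog {X : Type*} [MetricSpace X] [MeasurableSpace X]
    (A : Set X) (μ : Measure X) (lam kappa del Del : ℝ) : Prop where
  compact : IsCompact A
  diam_pos : 0 < Metric.diam A
  prob : IsProbabilityMeasure μ
  supp_null : μ Aᶜ = 0
  supp_pos : ∀ x ∈ A, ∀ r : ℝ, 0 < r → 0 < μ (Metric.closedBall x r)
  one_le_lam : 1 ≤ lam
  ratio_le : ∀ x₁ ∈ A, ∀ x₂ ∈ A, ∀ r : ℝ, 0 < r → r ≤ Metric.diam A →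
    (μ (Metric.closedBall x₁ r)).toReal ≤ lam * (μ (Metric.closedBall x₂ r)).toReal
  kappa_pos : 0 < kappa
  kappa_lt_one : kappa < 1
  one_lt_del : 1 < del
  del_le_Del : del ≤ Del
  scale_lower : ∀ x ∈ A, ∀ r : ℝ, 0 < r → r ≤ Metric.diam A →
    del * (μ (Metric.closedBall x (kappa * r))).toReal ≤ (μ (Metric.closedBall x r)).toReal
  scale_upper : ∀ x ∈ A, ∀ r : ℝ, 0 < r → r ≤ Metric.diam A →
    (μ (Metric.closedBall x r)).toReal ≤ Del * (μ (Metric.closedBall x (kappa * r))).toReal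

/-- `alphaPt μ x r = log μ(B(x,r)) / log r`. -/
def alphaPt {X : Type*} [MetricSpace X] [MeasurableSpace X]
    (μ : Measure X) (x : X) (r : ℝ) : ℝ :=
  Real.log (μ (Metric.closedBall x r)).toReal / Real.log r

/-- `g ∼ h` : `|h r - g r| = O(1/|log r|)` as `r → 0⁺`. -/
def EquivNearZero (g h : ℝ → ℝ) : Prop :=
  ∃ C : ℝ, 0 < C ∧ ∃ δ : ℝ, 0 < δ ∧ ∀ r : ℝ, 0 < r → r < δ → |h r - g r| ≤ C / |Real.log r|

/-- `g` is a representative of the equivalence class `[α_A(x,·)]` of the homogeneous set `A`. -/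
def IsAlphaRep {X : Type*} [MetricSpace X] [MeasurableSpace X]
    (A : Set X) (μ : Measure X) (g : ℝ → ℝ) : Prop :=
  ∃ x ∈ A, EquivNearZero g (fun r => alphaPt μ x r)

/-- `χ(A,B)` computed from representatives `g` of `[α_A]` and `h` of `[α_B]`. -/
def chiFun (g h : ℝ → ℝ) : ℝ :=
  Filter.limsup (fun r => |Real.log (g r / h r)|) (nhdsWithin (0 : ℝ) (Set.Ioi 0))

/-- `N(A,r)`: the smallest number of closed balls of radius `r` needed to cover `A`. -/
def coverNum {X : Type*} [MetricSpace X] (A : Set X) (r : ℝ) : ℕ :=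
  sInf {m : ℕ | ∃ s : Finset X, s.card = m ∧ A ⊆ ⋃ x ∈ s, Metric.closedBall x r}

/-- Lower box-counting dimension. -/
def lowerBoxDim {X : Type*} [MetricSpace X] (A : Set X) : ℝ :=
  Filter.liminf (fun r : ℝ => Real.log (coverNum A r : ℝ) / (-Real.log r))
    (nhdsWithin (0 : ℝ) (Set.Ioi 0))

/-- Upper box-counting dimension. -/
def upperBoxDim {X : Type*} [MetricSpace X] (A : Set X) : ℝ :=
  Filter.limsup (fun r : ℝ => Real.log (coverNum A r : ℝ) / (-Real.log r))
    (nhdsWithin (0 : ℝ) (Set.Ioi 0))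

/-- Radius-based packing premeasure. -/
def packPre {X : Type*} [MetricSpace X] (A : Set X) (s : ℝ) : ℝ≥0∞ :=
  ⨅ (δ : ℝ) (_ : 0 < δ),
    ⨆ (m : ℕ) (x : Fin m → X) (ρ : Fin m → ℝ) (_ : ∀ i, x i ∈ A)
      (_ : ∀ i, 0 < ρ i ∧ ρ i ≤ δ)
      (_ : ∀ i j, i ≠ j →
        Disjoint (Metric.closedBall (x i) (ρ i)) (Metric.closedBall (x j) (ρ j))),
      ∑ i, ENNReal.ofReal (ρ i ^ s)

/-- Radius-based packing measure. -/
def packMeasure {X : Type*} [MetricSpace X] (A : Set X) (s : ℝ) : ℝ≥0∞ :=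
  ⨅ (F : ℕ → Set X) (_ : A ⊆ ⋃ m, F m), ∑' m, packPre (F m) s

/-- Radius-based packing dimension. -/
def packDim {X : Type*} [MetricSpace X] (A : Set X) : ℝ :=
  sInf {s : ℝ | 0 ≤ s ∧ packMeasure A s = 0}

/-- Distance between two sets, valued in `ℝ≥0∞`. -/
def setDistE {X : Type*} [MetricSpace X] (E F : Set X) : ℝ≥0∞ :=
  ⨅ (a : X) (_ : a ∈ E) (b : X) (_ : b ∈ F), edist a b

/-- Uniformly disconnected set. -/
def UnifDisconn {X : Type*} [MetricSpace X] (A : Set X) : Prop :=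
  ∃ C : ℝ, 1 < C ∧ ∃ rstar : ℝ, 0 < rstar ∧ ∀ x ∈ A, ∀ r : ℝ, 0 < r → r < rstar →
    ∃ E : Set X, E ⊆ A ∧ A ∩ Metric.closedBall x r ⊆ E ∧
      E ⊆ Metric.closedBall x (C * r) ∧ ENNReal.ofReal r < setDistE E (A \ E)

/-- `A` can be bilipschitz embedded into `B`. -/
def BilipEmbed {X Y : Type*} [MetricSpace X] [MetricSpace Y] (A : Set X) (B : Set Y) : Prop :=
  ∃ (f : X → Y) (L : ℝ), 1 ≤ L ∧ Set.MapsTo f A B ∧ Set.InjOn f A ∧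
    ∀ x₁ ∈ A, ∀ x₂ ∈ A,
      dist x₁ x₂ / L ≤ dist (f x₁) (f x₂) ∧ dist (f x₁) (f x₂) ≤ L * dist x₁ x₂

/-- `A` and `B` are bilipschitz equivalent. -/
def BilipEquivSets {X Y : Type*} [MetricSpace X] [MetricSpace Y] (A : Set X) (B : Set Y) :
    Prop :=
  ∃ (f : X → Y) (L : ℝ), 1 ≤ L ∧ Set.BijOn f A B ∧
    ∀ x₁ ∈ A, ∀ x₂ ∈ A,
      dist x₁ x₂ / L ≤ dist (f x₁) (f x₂) ∧ dist (f x₁) (f x₂) ≤ L * dist x₁ x₂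

/-- `A` and `B` are quasi-Lipschitz equivalent. -/
def QuasiLipEquiv {X Y : Type*} [MetricSpace X] [MetricSpace Y] (A : Set X) (B : Set Y) : Prop :=
  ∃ f : X → Y, Set.BijOn f A B ∧
    ∀ ε : ℝ, 0 < ε → ∃ δ : ℝ, 0 < δ ∧ ∀ x₁ ∈ A, ∀ x₂ ∈ A,
      0 < dist x₁ x₂ → dist x₁ x₂ < δ →
      |Real.log (dist (f x₁) (f x₂)) / Real.log (dist x₁ x₂) - 1| < ε

/-- Ahlfors–David `s`-regular set. -/
def IsADRegular {X : Type*} [MetricSpace X] [MeasurableSpace X] (A : Set X) (s : ℝ) : Prop :=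
  IsCompact A ∧ 0 < Metric.diam A ∧
    ∃ (μ : Measure X) (c : ℝ), 1 ≤ c ∧ μ Aᶜ = 0 ∧
      ∀ x ∈ A, ∀ r : ℝ, 0 < r → r ≤ Metric.diam A →
        ENNReal.ofReal (c⁻¹ * r ^ s) ≤ μ (Metric.closedBall x r) ∧
          μ (Metric.closedBall x r) ≤ ENNReal.ofReal (c * r ^ s)

/-- `n₁ ⋯ n_k` (with `0`-based indexing of the sequence `n`). -/
def prodN (n : ℕ → ℕ) (k : ℕ) : ℕ := ∏ i ∈ Finset.range k, n i

/-- `c₁ ⋯ c_k` (with `0`-based indexing of the sequence `c`). -/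
def prodC (c : ℕ → ℝ) (k : ℕ) : ℝ := ∏ i ∈ Finset.range k, c i

/-- Admissible word for the branching sequence `n`. -/
def AdmWord (n : ℕ → ℕ) (w : List ℕ) : Prop := ∀ i : Fin w.length, w.get i < n i.val

/-- A Moran structure on `J ⊆ ℝ^d` with branching numbers `n` and ratios `c`:
`Jw w` is the basic set indexed by the word `w`. -/
structure IsMoranSystem {d : ℕ} (J : Set (EuclideanSpace ℝ (Fin d))) (n : ℕ → ℕ)
    (c : ℕ → ℝ) (Jw : List ℕ → Set (EuclideanSpace ℝ (Fin d))) : Prop where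
  compact : IsCompact J
  int_nonempty : (interior J).Nonempty
  two_le_n : ∀ k, 2 ≤ n k
  c_pos : ∀ k, 0 < c k
  c_lt_one : ∀ k, c k < 1
  c_inf_pos : ∃ c₀ : ℝ, 0 < c₀ ∧ ∀ k, c₀ ≤ c k
  root : Jw [] = J
  subset : ∀ w : List ℕ, AdmWord n w → ∀ i : ℕ, i < n w.length → Jw (w ++ [i]) ⊆ Jw w
  similar : ∀ w : List ℕ, AdmWord n w → ∀ i : ℕ, i < n w.length →
    ∃ S : EuclideanSpace ℝ (Fin d) → EuclideanSpace ℝ (Fin d),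
      (∀ x y, dist (S x) (S y) = c w.length * dist x y) ∧ Jw (w ++ [i]) = S '' Jw w
  disj_int : ∀ w : List ℕ, AdmWord n w → ∀ i : ℕ, i < n w.length → ∀ j : ℕ, j < n w.length →
    i ≠ j → Disjoint (interior (Jw (w ++ [i]))) (interior (Jw (w ++ [j])))

/-- The Moran set determined by the family `Jw`. -/
def moranSet {d : ℕ} (n : ℕ → ℕ) (Jw : List ℕ → Set (EuclideanSpace ℝ (Fin d))) :
    Set (EuclideanSpace ℝ (Fin d)) :=
  ⋂ k : ℕ, ⋃ (w : List ℕ) (_ : w.length = k ∧ AdmWord n w), Jw w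

/-- The index `k` such that `(c₁⋯c_k)·D < r ≤ (c₁⋯c_{k-1})·D`. -/
def levelOf (c : ℕ → ℝ) (D r : ℝ) : ℕ := sInf {k : ℕ | prodC c k * D < r}

/-- `Φ(r) = n₁⋯n_k` whenever `(c₁⋯c_k)·D < r ≤ (c₁⋯c_{k-1})·D`, where `D = |J|`. -/
def Phi (n : ℕ → ℕ) (c : ℕ → ℝ) (D r : ℝ) : ℕ := prodN n (levelOf c D r)

section MoranAux

open MeasureTheory Metric
open scoped Pointwise

variable {d : ℕ}

local notation "E" => EuclideanSpace ℝ (Fin d)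


lemma sim_decomp (S : E → E) (ρ : ℝ) (hρ : 0 < ρ)
    (hS : ∀ x y, dist (S x) (S y) = ρ * dist x y) :
    ∃ (L : EuclideanSpace ℝ (Fin d) ≃ₗᵢ[ℝ] EuclideanSpace ℝ (Fin d)) (b : E),
      ∀ x, S x = b + ρ • L x := by
  set T : E → E := fun x => ρ⁻¹ • (S x - S 0) with hTdef
  have hT : Isometry T := by
    apply Isometry.of_dist_eq
    intro x y
    simp only [hTdef]
    rw [dist_smul₀, dist_sub_right, hS, Real.norm_eq_abs, abs_of_pos (inv_pos.2 hρ)]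
    field_simp
  have hT0 : T 0 = 0 := by simp [hTdef]
  set hAI := hT.affineIsometryOfStrictConvexSpace with hAIdef
  have hAIc : ∀ x, hAI x = T x := fun _ => rfl
  have hlin : ∀ x, hAI.linearIsometry x = T x := by
    intro x
    have h1 := hAI.map_vadd 0 x
    rw [vadd_eq_add, add_zero, hAIc, hAIc, hT0, vadd_eq_add, add_zero] at h1
    exact h1.symm
  refine ⟨hAI.linearIsometry.toLinearIsometryEquiv rfl, S 0, fun x => ?_⟩
  have : (hAI.linearIsometry.toLinearIsometryEquiv rfl : E → E) x = hAI.linearIsometry x := rfl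
  rw [this, hlin]
  simp only [hTdef]
  rw [smul_inv_smul₀ hρ.ne']
  abel

lemma sim_volume (S : E → E) (ρ : ℝ) (hρ : 0 < ρ)
    (hS : ∀ x y, dist (S x) (S y) = ρ * dist x y) (A : Set E) (hA : MeasurableSet A) :
    volume (S '' A) = ENNReal.ofReal (ρ ^ d) * volume A := by
  obtain ⟨L, b, hL⟩ := sim_decomp S ρ hρ hS
  have him : S '' A = b +ᵥ (ρ • (L '' A) : Set (EuclideanSpace ℝ (Fin d))) := by
    ext y
    simp only [Set.mem_image, Set.mem_vadd_set, Set.mem_smul_set]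
    constructor
    · rintro ⟨x, hx, rfl⟩
      exact ⟨ρ • L x, ⟨L x, ⟨x, hx, rfl⟩, rfl⟩, by rw [hL x, vadd_eq_add, add_comm]⟩
    · rintro ⟨z, ⟨w, ⟨x, hx, rfl⟩, rfl⟩, rfl⟩
      exact ⟨x, hx, by rw [hL x, vadd_eq_add]⟩
  have hLim : volume ((L : EuclideanSpace ℝ (Fin d) → EuclideanSpace ℝ (Fin d)) '' A)
      = volume A := by
    have : (L : EuclideanSpace ℝ (Fin d) → EuclideanSpace ℝ (Fin d)) '' A
        = (L.symm : EuclideanSpace ℝ (Fin d) → EuclideanSpace ℝ (Fin d)) ⁻¹' A := by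
      ext y
      simp only [Set.mem_image, Set.mem_preimage]
      constructor
      · rintro ⟨x, hx, rfl⟩; simpa using hx
      · intro hy; exact ⟨L.symm y, hy, by simp⟩
    rw [this]
    exact L.symm.measurePreserving.measure_preimage hA.nullMeasurableSet
  rw [him, measure_vadd, Measure.addHaar_smul, hLim, abs_of_nonneg (by positivity),
    finrank_euclideanSpace, Fintype.card_fin]

lemma sim_homeo (S : E → E) (ρ : ℝ) (hρ : 0 < ρ)
    (hS : ∀ x y, dist (S x) (S y) = ρ * dist x y) :
    ∃ h : EuclideanSpace ℝ (Fin d) ≃ₜ EuclideanSpace ℝ (Fin d), ⇑h = S := by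
  obtain ⟨L, b, hL⟩ := sim_decomp S ρ hρ hS
  refine ⟨(L.toHomeomorph.trans (Homeomorph.smulOfNeZero ρ hρ.ne')).trans
    (Homeomorph.addLeft b), ?_⟩
  funext x
  simp only [Homeomorph.trans_apply, Homeomorph.coe_addLeft, LinearIsometryEquiv.coe_toHomeomorph]
  rw [hL x]
  rfl

lemma sim_image_interior (S : E → E) (ρ : ℝ) (hρ : 0 < ρ)
    (hS : ∀ x y, dist (S x) (S y) = ρ * dist x y) (A : Set E) :
    S '' interior A = interior (S '' A) := by
  obtain ⟨h, hh⟩ := sim_homeo S ρ hρ hS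
  rw [← hh]
  exact h.image_interior A

lemma sim_diam (S : E → E) (ρ : ℝ) (hρ : 0 < ρ)
    (hS : ∀ x y, dist (S x) (S y) = ρ * dist x y) (A : Set E)
    (hA : Bornology.IsBounded A) :
    Metric.diam (S '' A) = ρ * Metric.diam A := by
  have hlip : LipschitzWith ρ.toNNReal S := by
    apply LipschitzWith.of_dist_le_mul
    intro x y
    rw [hS, Real.coe_toNNReal _ hρ.le]
  have hbd : Bornology.IsBounded (S '' A) := hlip.isBounded_image hA
  apply le_antisymm
  · apply Metric.diam_le_of_forall_dist_le (by positivity)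
    rintro _ ⟨x, hx, rfl⟩ _ ⟨y, hy, rfl⟩
    rw [hS]
    exact mul_le_mul_of_nonneg_left (Metric.dist_le_diam_of_mem hA hx hy) hρ.le
  · have h1 : Metric.diam A ≤ ρ⁻¹ * Metric.diam (S '' A) := by
      apply Metric.diam_le_of_forall_dist_le (by positivity)
      intro x hx y hy
      rw [← mul_le_mul_iff_right₀ hρ, ← mul_assoc, mul_inv_cancel₀ hρ.ne', one_mul, ← hS]
      exact Metric.dist_le_diam_of_mem hbd ⟨x, hx, rfl⟩ ⟨y, hy, rfl⟩
    calc ρ * Metric.diam A ≤ ρ * (ρ⁻¹ * Metric.diam (S '' A)) :=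
          mul_le_mul_of_nonneg_left h1 hρ.le
      _ = Metric.diam (S '' A) := by field_simp



lemma adm_iff {n : ℕ → ℕ} {w : List ℕ} :
    AdmWord n w ↔ ∀ j (h : j < w.length), w[j] < n j := by
  constructor
  · intro H j h; exact H ⟨j, h⟩
  · intro H i; exact H i.val i.isLt

lemma adm_take {n : ℕ → ℕ} {w : List ℕ} (h : AdmWord n w) (m : ℕ) : AdmWord n (w.take m) := by
  rw [adm_iff] at h ⊢
  intro j hj
  rw [List.getElem_take]
  exact h j (hj.trans_le (by simp [List.length_take]))

lemma adm_append_elim {n : ℕ → ℕ} {w : List ℕ} {i : ℕ} (h : AdmWord n (w ++ [i])) :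
    AdmWord n w ∧ i < n w.length := by
  rw [adm_iff] at h
  constructor
  · rw [adm_iff]
    intro j hj
    have := h j (by simp; omega)
    rwa [List.getElem_append_left hj] at this
  · have := h w.length (by simp)
    simpa using this

lemma adm_cons_mid {n : ℕ → ℕ} {u t : List ℕ} {a : ℕ} (h : AdmWord n (u ++ a :: t)) :
    AdmWord n u ∧ a < n u.length := by
  rw [adm_iff] at h
  constructor
  · rw [adm_iff]
    intro j hj
    have := h j (by simp; omega)
    rwa [List.getElem_append_left hj] at this
  · have := h u.length (by simp)
    rw [List.getElem_append_right (le_refl u.length)] at this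
    simpa using this

lemma prodC_pos {c : ℕ → ℝ} (hc : ∀ k, 0 < c k) (k : ℕ) : 0 < prodC c k :=
  Finset.prod_pos (fun i _ => hc i)

variable {J : Set (EuclideanSpace ℝ (Fin d))} {n : ℕ → ℕ} {c : ℕ → ℝ}
  {Jw : List ℕ → Set (EuclideanSpace ℝ (Fin d))}

lemma moran_basic (M : IsMoranSystem J n c Jw) (hdiam : Metric.diam J = 1) :
    ∀ w : List ℕ, AdmWord n w → IsCompact (Jw w) ∧
      Metric.diam (Jw w) = prodC c w.length ∧
      volume (interior (Jw w)) = ENNReal.ofReal (prodC c w.length ^ d) * volume (interior J) ∧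
      Jw w ⊆ J := by
  intro w
  induction w using List.reverseRecOn with
  | nil =>
    intro _
    rw [M.root]
    exact ⟨M.compact, by simp [prodC, hdiam], by simp [prodC], subset_rfl⟩
  | append_singleton u i ih =>
    intro hadm
    obtain ⟨hu, hi⟩ := adm_append_elim hadm
    obtain ⟨hcmp, hdm, hvol, hsub⟩ := ih hu
    obtain ⟨S, hSd, hSim⟩ := M.similar u hu i hi
    have hc := M.c_pos u.length
    have hpp := prodC_pos M.c_pos u.length
    have hlip : LipschitzWith (c u.length).toNNReal S :=
      LipschitzWith.of_dist_le_mul (fun x y => by rw [hSd, Real.coe_toNNReal _ hc.le])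
    have hlen : (u ++ [i]).length = u.length + 1 := by simp
    have hpc : prodC c (u.length + 1) = prodC c u.length * c u.length :=
      Finset.prod_range_succ c u.length
    refine ⟨?_, ?_, ?_, (M.subset u hu i hi).trans hsub⟩
    · rw [hSim]; exact hcmp.image hlip.continuous
    · rw [hSim, sim_diam S _ hc hSd _ hcmp.isBounded, hdm, hlen, hpc]; ring
    · rw [hSim, ← sim_image_interior S _ hc hSd,
        sim_volume S _ hc hSd _ isOpen_interior.measurableSet, hvol, hlen, hpc,
        ← mul_assoc, ← ENNReal.ofReal_mul (by positivity), mul_pow]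
      congr 2
      ring

lemma moran_prefix (M : IsMoranSystem J n c Jw) :
    ∀ w : List ℕ, AdmWord n w → ∀ m : ℕ, Jw w ⊆ Jw (w.take m) := by
  intro w
  induction w using List.reverseRecOn with
  | nil => intro _ m; simp
  | append_singleton u i ih =>
    intro hadm m
    obtain ⟨hu, hi⟩ := adm_append_elim hadm
    rcases le_or_gt m u.length with hm | hm
    · rw [List.take_append_of_le_length hm]
      exact (M.subset u hu i hi).trans (ih hu m)
    · rw [List.take_of_length_le (by simp; omega)]

lemma moran_disj_aux (M : IsMoranSystem J n c Jw) :
    ∀ (w w' u : List ℕ), AdmWord n (u ++ w) → AdmWord n (u ++ w') →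
      w.length = w'.length → w ≠ w' →
      Disjoint (interior (Jw (u ++ w))) (interior (Jw (u ++ w'))) := by
  intro w
  induction w with
  | nil => intro w' u _ _ hlen hne; cases w' <;> simp_all
  | cons a t ih =>
    intro w' u hw hw' hlen hne
    cases w' with
    | nil => simp at hlen
    | cons a' t' =>
      have hassoc : ∀ (b : ℕ) (s : List ℕ), u ++ b :: s = (u ++ [b]) ++ s := by
        intro b s; simp
      by_cases haa : a = a'
      · subst haa
        rw [hassoc a t, hassoc a t']
        exact ih t' (u ++ [a]) (by rw [← hassoc]; exact hw) (by rw [← hassoc]; exact hw')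
          (by simpa using hlen) (fun h => hne (by rw [h]))
      · have htake : ∀ (b : ℕ) (s : List ℕ), (u ++ b :: s).take (u.length + 1) = u ++ [b] := by
          intro b s
          have h1 : u.length + 1 - u.length = 1 := by omega
          rw [List.take_append, List.take_of_length_le (by omega), h1,
            List.take_succ_cons, List.take_zero]
        have hsub1 : Jw (u ++ a :: t) ⊆ Jw (u ++ [a]) := by
          have := moran_prefix M (u ++ a :: t) hw (u.length + 1)
          rwa [htake] at this
        have hsub2 : Jw (u ++ a' :: t') ⊆ Jw (u ++ [a']) := by
          have := moran_prefix M (u ++ a' :: t') hw' (u.length + 1)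
          rwa [htake] at this
        obtain ⟨hu, ha⟩ := adm_cons_mid hw
        obtain ⟨_, ha'⟩ := adm_cons_mid hw'
        exact (M.disj_int u hu a ha a' ha' haa).mono (interior_mono hsub1) (interior_mono hsub2)

lemma prodN_pos {n : ℕ → ℕ} (hn : ∀ k, 2 ≤ n k) (k : ℕ) : 0 < prodN n k :=
  Finset.prod_pos (fun i _ => lt_of_lt_of_le two_pos (hn i))


end MoranAux

open Metric MeasureTheory in
/-- Estimate for the Moran measure: there is a constant `C_E > 1`, depending only on the
dimension `d` and the Lebesgue measure of the interior of `J`, such that for `x ∈ E`,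
`k ≥ 1` and `r_k < r ≤ r_{k−1}` one has
`(n₁⋯n_k)⁻¹ ≤ μ(B(x,r)) ≤ C_E (n₁⋯n_{k−1})⁻¹`, where `μ` is the Moran measure, i.e. the
image under the coding map `f` of the product measure `ν` giving each level-`k` cylinder
measure `(n₁⋯n_k)⁻¹`. -/
theorem statement4 (d : ℕ) (v : ℝ≥0∞) :
    ∃ C : ℝ, 1 < C ∧
      ∀ (J : Set (EuclideanSpace ℝ (Fin d))) (n : ℕ → ℕ) (c : ℕ → ℝ)
        (Jw : List ℕ → Set (EuclideanSpace ℝ (Fin d))),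
        IsMoranSystem J n c Jw → Metric.diam J = 1 → volume (interior J) = v →
        ∀ (ν : Measure (∀ k : ℕ, Fin (n k))) (f : (∀ k : ℕ, Fin (n k)) → EuclideanSpace ℝ (Fin d)),
          IsProbabilityMeasure ν →
          (∀ (k : ℕ) (w : ∀ j : ℕ, Fin (n j)),
            ν {ω | ∀ i : ℕ, i < k → ω i = w i} = ((prodN n k : ℝ≥0∞))⁻¹) →
          Measurable f →
          (∀ (w : ∀ j : ℕ, Fin (n j)) (k : ℕ),
            f w ∈ Jw (List.ofFn fun i : Fin k => ((w i.val).val))) →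
          ∀ x ∈ moranSet n Jw, ∀ k : ℕ, 1 ≤ k → ∀ r : ℝ,
            prodC c k < r → r ≤ prodC c (k - 1) →
            ((prodN n k : ℝ))⁻¹ ≤ ((ν.map f) (Metric.closedBall x r)).toReal ∧
              ((ν.map f) (Metric.closedBall x r)).toReal ≤ C * ((prodN n (k - 1) : ℝ))⁻¹ := by
  classical
  set K : ℝ≥0∞ := ENNReal.ofReal (2 ^ d) *
    volume (Metric.ball (0 : EuclideanSpace ℝ (Fin d)) 1) / v with hKdef
  refine ⟨max 2 (K.toReal + 1), lt_of_lt_of_le one_lt_two (le_max_left _ _), ?_⟩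
  intro J n c Jw M hdiam hvol ν f hνprob hν2 hmf hfJ x hx k hk r hr1 hr2
  have hnpos : ∀ j, 0 < n j := fun j => lt_of_lt_of_le two_pos (M.two_le_n j)
  have hprobmap : IsProbabilityMeasure (ν.map f) := Measure.isProbabilityMeasure_map hmf.aemeasurable
  have hmap : (ν.map f) (Metric.closedBall x r) = ν (f ⁻¹' Metric.closedBall x r) :=
    Measure.map_apply hmf measurableSet_closedBall
  have hr0 : 0 < r := lt_trans (prodC_pos M.c_pos k) hr1
  constructor
  · -- lower bound
    have hxk := Set.mem_iInter.1 hx k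
    simp only [Set.mem_iUnion] at hxk
    obtain ⟨w, ⟨hwlen, hwadm⟩, hxw⟩ := hxk
    set w' : ∀ j : ℕ, Fin (n j) := fun j =>
      if h : j < k then ⟨w[j]'(hwlen ▸ h), (adm_iff.1 hwadm) j (hwlen ▸ h)⟩
      else ⟨0, hnpos j⟩ with hw'def
    have hcylsub : {ω : ∀ j : ℕ, Fin (n j) | ∀ i : ℕ, i < k → ω i = w' i}
        ⊆ f ⁻¹' Metric.closedBall x r := by
      intro ω hω
      have hlist : (List.ofFn fun i : Fin k => ((ω i.val).val)) = w := by
        apply List.ext_getElem (by simp [hwlen])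
        intro j h1 h2
        rw [List.getElem_ofFn]
        have hjk : j < k := by simpa using h1
        have := hω j hjk
        rw [this, hw'def]
        simp [hjk]
      have hfw : f ω ∈ Jw w := by
        have := hfJ ω k
        rwa [hlist] at this
      have hcomp := (moran_basic M hdiam w hwadm).1
      have hdm := (moran_basic M hdiam w hwadm).2.1
      simp only [Set.mem_preimage, Metric.mem_closedBall]
      calc dist (f ω) x ≤ Metric.diam (Jw w) :=
            Metric.dist_le_diam_of_mem hcomp.isBounded hfw hxw
        _ = prodC c k := by rw [hdm, hwlen]
        _ ≤ r := hr1.le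
    have hle : ((prodN n k : ℝ≥0∞))⁻¹ ≤ (ν.map f) (Metric.closedBall x r) := by
      rw [hmap, ← hν2 k w']
      exact measure_mono hcylsub
    have htr : (((prodN n k : ℝ≥0∞))⁻¹).toReal = ((prodN n k : ℝ))⁻¹ := by
      rw [ENNReal.toReal_inv]; simp
    rw [← htr]
    exact ENNReal.toReal_mono (measure_ne_top _ _) hle
  · -- upper bound
    set m := k - 1 with hmdef
    have hρ : 0 < prodC c m := prodC_pos M.c_pos m
    set ρ := prodC c m with hρdef
    set word : (∀ i : Fin m, Fin (n i.val)) → List ℕ :=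
      fun σ => List.ofFn fun i => (σ i).val with hworddef
    have hwlen : ∀ σ, (word σ).length = m := fun σ => by simp [hworddef]
    have hwadm : ∀ σ, AdmWord n (word σ) := by
      intro σ
      rw [adm_iff]
      intro j hj
      have hj' : j < m := by simpa [hworddef] using hj
      have heq : (word σ)[j]'hj = (σ ⟨j, hj'⟩).val := by
        simp [hworddef]
      rw [heq]
      exact (σ _).isLt
    set W : Finset (∀ i : Fin m, Fin (n i.val)) :=
      Finset.univ.filter (fun σ => (Jw (word σ) ∩ Metric.closedBall x r).Nonempty) with hWdef
    have hcover : f ⁻¹' Metric.closedBall x r ⊆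
        ⋃ σ ∈ W, {ω : ∀ j : ℕ, Fin (n j) | ∀ i : Fin m, ω i.val = σ i} := by
      intro ω hω
      set σ : ∀ i : Fin m, Fin (n i.val) := fun i => ω i.val with hσdef
      have hfω : f ω ∈ Jw (word σ) := hfJ ω m
      have hσW : σ ∈ W := by
        rw [hWdef, Finset.mem_filter]
        exact ⟨Finset.mem_univ _, ⟨f ω, hfω, hω⟩⟩
      exact Set.mem_biUnion hσW (fun i => rfl)
    have hcyl : ∀ σ : (∀ i : Fin m, Fin (n i.val)),
        ν {ω : ∀ j : ℕ, Fin (n j) | ∀ i : Fin m, ω i.val = σ i}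
        = ((prodN n m : ℝ≥0∞))⁻¹ := by
      intro σ
      set σ' : ∀ j : ℕ, Fin (n j) := fun j =>
        if h : j < m then σ ⟨j, h⟩ else ⟨0, hnpos j⟩ with hσ'def
      have hseteq : {ω : ∀ j : ℕ, Fin (n j) | ∀ i : Fin m, ω i.val = σ i}
          = {ω | ∀ i : ℕ, i < m → ω i = σ' i} := by
        ext ω
        simp only [Set.mem_setOf_eq]
        constructor
        · intro H i hi
          rw [hσ'def]
          simp only [hi, dif_pos]
          exact H ⟨i, hi⟩
        · intro H i
          have hh := H i.val i.isLt
          rw [hσ'def] at hh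
          simp only [i.isLt, dif_pos] at hh
          rw [hh]
      rw [hseteq, hν2 m σ']
    have hb1 : ν (f ⁻¹' Metric.closedBall x r)
        ≤ (W.card : ℝ≥0∞) * ((prodN n m : ℝ≥0∞))⁻¹ := by
      calc ν (f ⁻¹' Metric.closedBall x r)
          ≤ ∑ σ ∈ W, ν {ω : ∀ j : ℕ, Fin (n j) | ∀ i : Fin m, ω i.val = σ i} :=
            (measure_mono hcover).trans (measure_biUnion_finset_le W _)
        _ = (W.card : ℝ≥0∞) * ((prodN n m : ℝ≥0∞))⁻¹ := by
            simp [hcyl, Finset.sum_const, nsmul_eq_mul]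
    have hv0 : v ≠ 0 := by
      rw [← hvol]
      exact (isOpen_interior.measure_pos volume M.int_nonempty).ne'
    have hvtop : v ≠ ⊤ := by
      rw [← hvol]
      exact ((measure_mono interior_subset).trans_lt M.compact.measure_lt_top).ne
    have hdisj : (↑W : Set (∀ i : Fin m, Fin (n i.val))).PairwiseDisjoint
        (fun σ => interior (Jw (word σ))) := by
      intro σ _ σ' _ hne
      have hwne : word σ ≠ word σ' := by
        intro h
        apply hne
        rw [hworddef] at h
        have h2 := List.ofFn_injective h
        funext i
        exact Fin.ext (congrFun h2 i)
      have := moran_disj_aux M (word σ) (word σ') [] (by simpa using hwadm σ)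
        (by simpa using hwadm σ') (by rw [hwlen, hwlen]) hwne
      simpa using this
    have hsubball : ∀ σ ∈ W, interior (Jw (word σ)) ⊆ Metric.closedBall x (2 * ρ) := by
      intro σ hσ y hy
      rw [hWdef, Finset.mem_filter] at hσ
      obtain ⟨z, hz1, hz2⟩ := hσ.2
      have hcomp := (moran_basic M hdiam (word σ) (hwadm σ)).1
      have hdm := (moran_basic M hdiam (word σ) (hwadm σ)).2.1
      rw [hwlen] at hdm
      have hy' : y ∈ Jw (word σ) := interior_subset hy
      rw [Metric.mem_closedBall]
      calc dist y x ≤ dist y z + dist z x := dist_triangle _ _ _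
        _ ≤ ρ + r := add_le_add
            (le_of_le_of_eq (Metric.dist_le_diam_of_mem hcomp.isBounded hy' hz1) hdm)
            (Metric.mem_closedBall.1 hz2)
        _ ≤ 2 * ρ := by linarith [hr2]
    have hvoleq : ∀ σ, volume (interior (Jw (word σ))) = ENNReal.ofReal (ρ ^ d) * v := by
      intro σ
      have hh := (moran_basic M hdiam (word σ) (hwadm σ)).2.2.1
      rw [hwlen] at hh
      rw [hh, hvol]
    have hBd : volume (Metric.ball (0 : EuclideanSpace ℝ (Fin d)) 1) ≠ ⊤ :=
      ((measure_mono Metric.ball_subset_closedBall).trans_lt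
        (isCompact_closedBall _ _).measure_lt_top).ne
    have hsum : ((W.card : ℝ≥0∞) * v) * ENNReal.ofReal (ρ ^ d)
        ≤ (ENNReal.ofReal (2 ^ d) *
            volume (Metric.ball (0 : EuclideanSpace ℝ (Fin d)) 1)) * ENNReal.ofReal (ρ ^ d) := by
      have hchain : (W.card : ℝ≥0∞) * (ENNReal.ofReal (ρ ^ d) * v)
          ≤ ENNReal.ofReal (2 ^ d * ρ ^ d) *
            volume (Metric.ball (0 : EuclideanSpace ℝ (Fin d)) 1) := by
        calc (W.card : ℝ≥0∞) * (ENNReal.ofReal (ρ ^ d) * v)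
            = ∑ _σ ∈ W, (ENNReal.ofReal (ρ ^ d) * v) := by
              simp [Finset.sum_const, nsmul_eq_mul]
          _ = ∑ σ ∈ W, volume (interior (Jw (word σ))) := by
              exact Finset.sum_congr rfl (fun σ _ => (hvoleq σ).symm)
          _ = volume (⋃ σ ∈ W, interior (Jw (word σ))) :=
              (measure_biUnion_finset hdisj (fun σ _ => isOpen_interior.measurableSet)).symm
          _ ≤ volume (Metric.closedBall x (2 * ρ)) := measure_mono (Set.iUnion₂_subset hsubball)
          _ = ENNReal.ofReal ((2 * ρ) ^ d) *
              volume (Metric.ball (0 : EuclideanSpace ℝ (Fin d)) 1) := by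
              rw [Measure.addHaar_closedBall volume x (by positivity), finrank_euclideanSpace,
                Fintype.card_fin]
          _ = _ := by rw [mul_pow]
      calc ((W.card : ℝ≥0∞) * v) * ENNReal.ofReal (ρ ^ d)
          = (W.card : ℝ≥0∞) * (ENNReal.ofReal (ρ ^ d) * v) := by ring
        _ ≤ ENNReal.ofReal (2 ^ d * ρ ^ d) *
            volume (Metric.ball (0 : EuclideanSpace ℝ (Fin d)) 1) := hchain
        _ = _ := by rw [ENNReal.ofReal_mul (by positivity)]; ring
    have hcancel : (W.card : ℝ≥0∞) * v ≤ ENNReal.ofReal (2 ^ d) *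
        volume (Metric.ball (0 : EuclideanSpace ℝ (Fin d)) 1) :=
      (ENNReal.mul_le_mul_iff_left (by simp [ENNReal.ofReal_eq_zero]; positivity)
        ENNReal.ofReal_ne_top).1 hsum
    have hKcard : (W.card : ℝ≥0∞) ≤ K := by
      rw [hKdef, ENNReal.le_div_iff_mul_le (Or.inl hv0) (Or.inl hvtop)]
      exact hcancel
    have hKne : K ≠ ⊤ := by
      rw [hKdef]
      exact (ENNReal.div_lt_top (ENNReal.mul_ne_top ENNReal.ofReal_ne_top hBd) hv0).ne
    have hcardR : (W.card : ℝ) ≤ K.toReal := by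
      have := ENNReal.toReal_mono hKne hKcard
      simpa using this
    have hfinal1 : (ν.map f) (Metric.closedBall x r)
        ≤ (W.card : ℝ≥0∞) * ((prodN n m : ℝ≥0∞))⁻¹ := by rw [hmap]; exact hb1
    have hmulne : (W.card : ℝ≥0∞) * ((prodN n m : ℝ≥0∞))⁻¹ ≠ ⊤ :=
      ENNReal.mul_ne_top (ENNReal.natCast_ne_top _)
        (by simp [(prodN_pos M.two_le_n m).ne'])
    have h2 : ((ν.map f) (Metric.closedBall x r)).toReal
        ≤ (W.card : ℝ) * ((prodN n m : ℝ))⁻¹ := by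
      have := ENNReal.toReal_mono hmulne hfinal1
      rw [ENNReal.toReal_mul, ENNReal.toReal_inv] at this
      simpa using this
    calc ((ν.map f) (Metric.closedBall x r)).toReal
        ≤ (W.card : ℝ) * ((prodN n m : ℝ))⁻¹ := h2
      _ ≤ max 2 (K.toReal + 1) * ((prodN n m : ℝ))⁻¹ := by
          apply mul_le_mul_of_nonneg_right _ (by positivity)
          exact (hcardR.trans (by linarith)).trans (le_max_right _ _)


end
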